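/- Let γ₊, γ₋ : [0,∞) → ℝ be continuous functions such that for all t ≥ 0: γ₊(t) ≥ 0 and −γ₊(t) ≤ γ₋(t) ≤ γ₊(t). Let z : [0,∞) → ℝ be differentiable with ż(t) = −γ₊(t)z(t) + γ₋(t) for all t ≥ 0 and −1 ≤ z(0) ≤ 1. Then for all t ≥ 0: −(1 − (1 + z(0))e^{−γ̃₊(t)}) ≤ z(t) ≤ 1 − (1 − z(0))e^{−γ̃₊(t)}, where γ̃₊(t) = ∫₀ᵗ γ₊(τ)dτ. In particular, the particular solution s(t) (the solution with s(0) = 0) satisfies −(1 − e^{−γ̃₊(t)}) ≤ s(t) ≤ 1 − e^{−γ̃₊(t)} for all t ≥ 0. -/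

import Mathlib

open intervalIntegral MeasureTheory Set

private lemma pop_upper (γp γm : ℝ → ℝ)
    (hγp : ContinuousOn γp (Set.Ici 0))
    (hle : ∀ t ≥ (0 : ℝ), γm t ≤ γp t)
    (z : ℝ → ℝ)
    (hz : ∀ t ≥ (0 : ℝ), HasDerivAt z (-γp t * z t + γm t) t)
    (hz0 : z 0 ≤ 1) :
    ∀ t ≥ (0 : ℝ), z t ≤ 1 - (1 - z 0) * Real.exp (-(∫ τ in (0 : ℝ)..t, γp τ)) := by
  intro T hT
  rcases eq_or_lt_of_le hT with h0 | h0
  · simp [← h0]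
  set G : ℝ → ℝ := fun t => ∫ τ in (0 : ℝ)..t, γp τ with hGdef
  set u : ℝ → ℝ := fun t => (z t - 1) * Real.exp (G t) with hudef
  -- derivative of G at positive points
  have hG' : ∀ x > (0 : ℝ), HasDerivAt G (γp x) x := by
    intro x hx
    have hsub : Set.uIcc (0 : ℝ) x ⊆ Set.Ici 0 := by
      rw [Set.uIcc_of_le hx.le]; exact Set.Icc_subset_Ici_self
    refine intervalIntegral.integral_hasDerivAt_right
      ((hγp.mono hsub).intervalIntegrable) ?_ ?_
    · exact (ContinuousOn.stronglyMeasurableAtFilter isOpen_Ioi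
        (hγp.mono Set.Ioi_subset_Ici_self)) x hx
    · exact hγp.continuousAt (Ici_mem_nhds hx)
  -- derivative of u at interior points
  have hu' : ∀ x ∈ Set.Ioo (0 : ℝ) T,
      HasDerivAt u ((γm x - γp x) * Real.exp (G x)) x := by
    intro x hx
    have h1 := (hz x hx.1.le).sub_const 1
    have h2 := (hG' x hx.1).exp
    have := h1.mul h2
    simp only [Pi.mul_def] at this
    refine this.congr_deriv ?_
    ring
  -- continuity of u on Icc 0 T
  have hGc : ContinuousOn G (Set.Icc 0 T) := by
    have hint : IntegrableOn γp (Set.uIcc 0 T) := by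
      rw [Set.uIcc_of_le hT]
      exact (hγp.mono Set.Icc_subset_Ici_self).integrableOn_compact isCompact_Icc
    have := intervalIntegral.continuousOn_primitive_interval hint
    rwa [Set.uIcc_of_le hT] at this
  have hzc : ContinuousOn z (Set.Icc 0 T) := fun x hx =>
    ((hz x hx.1).continuousAt).continuousWithinAt
  have huc : ContinuousOn u (Set.Icc 0 T) :=
    (hzc.sub continuousOn_const).mul (Real.continuous_exp.comp_continuousOn hGc)
  -- u is antitone on Icc 0 T
  have hanti : AntitoneOn u (Set.Icc 0 T) := by
    refine antitoneOn_of_deriv_nonpos (convex_Icc 0 T) huc ?_ ?_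
    · intro x hx
      rw [interior_Icc] at hx
      exact (hu' x hx).differentiableAt.differentiableWithinAt
    · intro x hx
      rw [interior_Icc] at hx
      rw [(hu' x hx).deriv]
      exact mul_nonpos_of_nonpos_of_nonneg (sub_nonpos.2 (hle x hx.1.le))
        (Real.exp_pos _).le
  have key : u T ≤ u 0 :=
    hanti (Set.left_mem_Icc.2 hT) (Set.right_mem_Icc.2 hT) hT
  have hG0 : G 0 = 0 := intervalIntegral.integral_same
  have hu0 : u 0 = z 0 - 1 := by simp [hudef, hG0]
  rw [hu0] at key
  have hE : (0 : ℝ) < Real.exp (G T) := Real.exp_pos _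
  have : z T - 1 ≤ (z 0 - 1) * Real.exp (-(G T)) := by
    rw [Real.exp_neg, ← div_eq_mul_inv, le_div_iff₀ hE]
    exact key
  have : z T ≤ 1 - (1 - z 0) * Real.exp (-(G T)) := by linarith
  exact this

theorem population_bounds (γp γm : ℝ → ℝ)
    (hγp : ContinuousOn γp (Set.Ici 0))
    (hγm : ContinuousOn γm (Set.Ici 0))
    (hpos : ∀ t ≥ (0 : ℝ), 0 ≤ γp t)
    (hbound : ∀ t ≥ (0 : ℝ), -γp t ≤ γm t ∧ γm t ≤ γp t) :
    (∀ z : ℝ → ℝ,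
      (∀ t ≥ (0 : ℝ), HasDerivAt z (-γp t * z t + γm t) t) →
      -1 ≤ z 0 → z 0 ≤ 1 →
      ∀ t ≥ (0 : ℝ),
        -(1 - (1 + z 0) * Real.exp (-(∫ τ in (0 : ℝ)..t, γp τ))) ≤ z t ∧
        z t ≤ 1 - (1 - z 0) * Real.exp (-(∫ τ in (0 : ℝ)..t, γp τ))) ∧
    (∀ s : ℝ → ℝ,
      (∀ t ≥ (0 : ℝ), HasDerivAt s (-γp t * s t + γm t) t) →
      s 0 = 0 →
      ∀ t ≥ (0 : ℝ),
        -(1 - Real.exp (-(∫ τ in (0 : ℝ)..t, γp τ))) ≤ s t ∧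
        s t ≤ 1 - Real.exp (-(∫ τ in (0 : ℝ)..t, γp τ))) := by
  have main : ∀ z : ℝ → ℝ,
      (∀ t ≥ (0 : ℝ), HasDerivAt z (-γp t * z t + γm t) t) →
      -1 ≤ z 0 → z 0 ≤ 1 →
      ∀ t ≥ (0 : ℝ),
        -(1 - (1 + z 0) * Real.exp (-(∫ τ in (0 : ℝ)..t, γp τ))) ≤ z t ∧
        z t ≤ 1 - (1 - z 0) * Real.exp (-(∫ τ in (0 : ℝ)..t, γp τ)) := by
    intro z hz hz0l hz0u
    have hub := pop_upper γp γm hγp (fun t ht => (hbound t ht).2) z hz hz0u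
    have hzneg : ∀ t ≥ (0 : ℝ),
        HasDerivAt (fun t => -z t) (-γp t * (-z t) + (-γm t)) t := by
      intro t ht
      have := (hz t ht).neg
      simp only [Pi.neg_def] at this
      refine this.congr_deriv ?_
      ring
    have hlb := pop_upper γp (fun t => -γm t) hγp
      (fun t ht => by show -γm t ≤ γp t; have := (hbound t ht).1; linarith)
      (fun t => -z t) hzneg (by show -z 0 ≤ 1; linarith)
    intro t ht
    refine ⟨?_, hub t ht⟩
    have h := hlb t ht
    simp only [neg_sub] at h ⊢
    linarith
  refine ⟨main, ?_⟩
  intro s hs hs0 t ht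
  have := main s hs (by rw [hs0]; norm_num) (by rw [hs0]; norm_num) t ht
  rw [hs0] at this
  simpa using this
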